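/- Let A be a real n×n matrix. A is both normally elliptic and diagonalizable over ℝ (equivalently, diagonalizable with all eigenvalues real and positive) if and only if A is the product of two symmetric positive definite matrices. -/

import Mathlib

open Matrix

/-- A real square matrix is *normally elliptic* if every eigenvalue
(i.e. every element of the spectrum of the associated complex matrix)
has positive real part. -/
def NormallyElliptic {n : ℕ} (A : Matrix (Fin n) (Fin n) ℝ) : Prop :=
  ∀ μ ∈ spectrum ℂ (A.map Complex.ofReal), 0 < μ.re

/-- A (possibly nonsymmetric) real matrix is positive definite if `zᵀ M z > 0`
for all nonzero `z ∈ ℝⁿ`. -/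
def PosDefMat {n : ℕ} (M : Matrix (Fin n) (Fin n) ℝ) : Prop :=
  ∀ z : Fin n → ℝ, z ≠ 0 → 0 < z ⬝ᵥ M.mulVec z

/-- `A` is diagonalizable over ℝ. -/
def DiagonalizableR {n : ℕ} (A : Matrix (Fin n) (Fin n) ℝ) : Prop :=
  ∃ P Λ : Matrix (Fin n) (Fin n) ℝ, IsUnit P.det ∧ Λ.IsDiag ∧ A = P * Λ * P⁻¹

section Aux
variable {n : ℕ}

lemma spectrum_conj_diagonal (P : Matrix (Fin n) (Fin n) ℝ) (hP : IsUnit P.det)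
    (d : Fin n → ℝ) :
    spectrum ℂ ((P * diagonal d * P⁻¹).map Complex.ofReal)
      = Set.range (fun i => (d i : ℂ)) := by
  set F := (Complex.ofRealHom : ℝ →+* ℂ).mapMatrix (m := Fin n) with hF
  have hmap : ∀ M : Matrix (Fin n) (Fin n) ℝ, M.map Complex.ofReal = F M := fun _ => rfl
  have hFP : IsUnit (F P) := by
    rw [Matrix.isUnit_iff_isUnit_det]
    have : (F P).det = Complex.ofRealHom P.det := (RingHom.map_det _ _).symm
    rw [this]
    exact hP.map _
  have hinv : F P⁻¹ = (F P)⁻¹ := by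
    symm
    apply Matrix.inv_eq_right_inv
    rw [← _root_.map_mul F, Matrix.mul_nonsing_inv P hP, _root_.map_one F]
  have hu : (hFP.unit : Matrix (Fin n) (Fin n) ℂ) = F P := hFP.unit_spec
  have hu' : ((hFP.unit⁻¹ : (Matrix (Fin n) (Fin n) ℂ)ˣ) : Matrix (Fin n) (Fin n) ℂ)
      = (F P)⁻¹ := by rw [Matrix.coe_units_inv, hu]
  have hdiag : F (diagonal d) = diagonal (fun i => (d i : ℂ)) := by
    show (diagonal d).map Complex.ofReal = _
    rw [Matrix.diagonal_map (by simp)]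
  have key : F P * F (diagonal d) * (F P)⁻¹
      = (hFP.unit : Matrix (Fin n) (Fin n) ℂ) * F (diagonal d)
        * ((hFP.unit⁻¹ : (Matrix (Fin n) (Fin n) ℂ)ˣ) : Matrix (Fin n) (Fin n) ℂ) := by
    rw [hu, hu']
  rw [hmap, _root_.map_mul F, _root_.map_mul F, hinv, key, spectrum.units_conjugate,
    hdiag, spectrum_diagonal]

lemma normallyElliptic_conj (P : Matrix (Fin n) (Fin n) ℝ) (hP : IsUnit P.det)
    (d : Fin n → ℝ) (hd : ∀ i, 0 < d i) :
    NormallyElliptic (P * diagonal d * P⁻¹) := by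
  intro μ hμ
  rw [spectrum_conj_diagonal P hP d] at hμ
  obtain ⟨i, rfl⟩ := hμ
  simpa using hd i

lemma pos_of_normallyElliptic_conj {P : Matrix (Fin n) (Fin n) ℝ} (hP : IsUnit P.det)
    {d : Fin n → ℝ} (hNE : NormallyElliptic (P * diagonal d * P⁻¹)) (i : Fin n) : 0 < d i := by
  have := hNE (d i) (by rw [spectrum_conj_diagonal P hP d]; exact ⟨i, rfl⟩)
  simpa using this

lemma posDef_iff_symm_posDefMat {M : Matrix (Fin n) (Fin n) ℝ} :
    M.PosDef ↔ M.IsSymm ∧ PosDefMat M := by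
  constructor
  · rintro ⟨h1, h2⟩
    refine ⟨by rwa [Matrix.IsHermitian, conjTranspose_eq_transpose_of_trivial] at h1,
      fun z hz => ?_⟩
    have := (posDef_iff_dotProduct_mulVec.mp ⟨h1, h2⟩).2 hz
    rwa [star_trivial] at this
  · rintro ⟨h1, h2⟩
    refine posDef_iff_dotProduct_mulVec.mpr ⟨by rwa [Matrix.IsHermitian, conjTranspose_eq_transpose_of_trivial], fun z hz => ?_⟩
    rw [star_trivial]
    exact h2 z hz

end Aux

section Main
variable {n : ℕ}

lemma forward_dir {A : Matrix (Fin n) (Fin n) ℝ} (hNE : NormallyElliptic A)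
    (P Λ : Matrix (Fin n) (Fin n) ℝ) (hP : IsUnit P.det) (hΛ : Λ.IsDiag)
    (hA : A = P * Λ * P⁻¹) :
    ∃ A₁ A₂ : Matrix (Fin n) (Fin n) ℝ,
      A₁.IsSymm ∧ PosDefMat A₁ ∧ A₂.IsSymm ∧ PosDefMat A₂ ∧ A = A₁ * A₂ := by
  set d : Fin n → ℝ := Λ.diag with hd
  have hΛd : Λ = diagonal d := hΛ.diagonal_diag.symm
  rw [hΛd] at hA
  subst hA
  have hdpos : ∀ i, 0 < d i := pos_of_normallyElliptic_conj hP hNE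
  have hPt : IsUnit Pᵀ := (Matrix.isUnit_iff_isUnit_det _).2 (by rwa [Matrix.det_transpose])
  have hPinv : IsUnit P⁻¹ := Matrix.isUnit_nonsing_inv_iff.mpr ((Matrix.isUnit_iff_isUnit_det _).2 hP)
  refine ⟨P * Pᵀ, (P⁻¹)ᵀ * diagonal d * P⁻¹, ?_, ?_, ?_, ?_, ?_⟩
  · show (P * Pᵀ)ᵀ = P * Pᵀ
    rw [Matrix.transpose_mul, Matrix.transpose_transpose]
  · intro z hz
    have hy : Pᵀ *ᵥ z ≠ 0 := by
      intro h
      exact hz <| (Matrix.mulVec_injective_iff_isUnit.mpr hPt) (by simpa using h)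
    have : z ⬝ᵥ (P * Pᵀ) *ᵥ z = (Pᵀ *ᵥ z) ⬝ᵥ (Pᵀ *ᵥ z) := by
      rw [← Matrix.mulVec_mulVec, Matrix.dotProduct_mulVec, ← Matrix.mulVec_transpose]
    rw [this]
    have := Matrix.dotProduct_star_self_pos_iff.mpr hy
    rwa [star_trivial] at this
  · show ((P⁻¹)ᵀ * diagonal d * P⁻¹)ᵀ = _
    rw [Matrix.transpose_mul, Matrix.transpose_mul, Matrix.transpose_transpose,
      Matrix.diagonal_transpose, Matrix.mul_assoc]
  · intro z hz
    have hy : P⁻¹ *ᵥ z ≠ 0 := by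
      intro h
      exact hz <| (Matrix.mulVec_injective_iff_isUnit.mpr hPinv) (by simpa using h)
    have : z ⬝ᵥ ((P⁻¹)ᵀ * diagonal d * P⁻¹) *ᵥ z
        = (P⁻¹ *ᵥ z) ⬝ᵥ diagonal d *ᵥ (P⁻¹ *ᵥ z) := by
      rw [Matrix.mul_assoc, ← Matrix.mulVec_mulVec, Matrix.dotProduct_mulVec,
        ← Matrix.mulVec_transpose, Matrix.transpose_transpose, ← Matrix.mulVec_mulVec]
    rw [this]
    have := (Matrix.PosDef.diagonal hdpos).dotProduct_mulVec_pos hy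
    rwa [star_trivial] at this
  · have h1 : Pᵀ * (P⁻¹)ᵀ = 1 := by
      rw [← Matrix.transpose_mul, Matrix.nonsing_inv_mul P hP, Matrix.transpose_one]
    simp only [Matrix.mul_assoc]
    rw [← Matrix.mul_assoc Pᵀ, h1, Matrix.one_mul]

open scoped MatrixOrder in
lemma backward_dir (A₁ A₂ : Matrix (Fin n) (Fin n) ℝ)
    (h1s : A₁.IsSymm) (h1p : PosDefMat A₁) (h2s : A₂.IsSymm) (h2p : PosDefMat A₂) :
    NormallyElliptic (A₁ * A₂) ∧
      ∃ P Λ : Matrix (Fin n) (Fin n) ℝ, IsUnit P.det ∧ Λ.IsDiag ∧ A₁ * A₂ = P * Λ * P⁻¹ := by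
  have hA₁ : A₁.PosDef := posDef_iff_symm_posDefMat.mpr ⟨h1s, h1p⟩
  have hA₂ : A₂.PosDef := posDef_iff_symm_posDefMat.mpr ⟨h2s, h2p⟩
  set S := CFC.sqrt A₁ with hSdef
  have hS : S.PosSemidef := Matrix.nonneg_iff_posSemidef.mp (CFC.sqrt_nonneg A₁)
  have hSS : S * S = A₁ := CFC.sqrt_mul_sqrt_self A₁ (Matrix.nonneg_iff_posSemidef.mpr hA₁.posSemidef)
  have hSdet : IsUnit S.det := by
    have hdet : S.det * S.det = A₁.det := by rw [← Matrix.det_mul, hSS]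
    have hpos := hA₁.det_pos
    refine isUnit_iff_ne_zero.mpr fun h => ?_
    rw [h, mul_zero] at hdet
    exact hpos.ne (hdet)
  have hSunit : IsUnit S := (Matrix.isUnit_iff_isUnit_det _).2 hSdet
  have hSsymm : Sᵀ = S := by
    rw [← Matrix.conjTranspose_eq_transpose_of_trivial]
    exact hS.1
  set B := S * A₂ * S with hBdef
  have hB : B.PosDef := by
    refine posDef_iff_dotProduct_mulVec.mpr ⟨?_, fun x hx => ?_⟩
    · show Bᴴ = B
      rw [hBdef, Matrix.conjTranspose_mul, Matrix.conjTranspose_mul, hS.1, hA₂.1,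
        Matrix.mul_assoc]
    · have hy : S *ᵥ x ≠ 0 := by
        intro h
        exact hx <| (Matrix.mulVec_injective_iff_isUnit.mpr hSunit) (by simpa using h)
      have key : star x ⬝ᵥ B *ᵥ x = (S *ᵥ x) ⬝ᵥ A₂ *ᵥ (S *ᵥ x) := by
        rw [star_trivial, hBdef, Matrix.mul_assoc, ← Matrix.mulVec_mulVec,
          Matrix.dotProduct_mulVec, ← Matrix.mulVec_transpose, hSsymm, ← Matrix.mulVec_mulVec]
      rw [key]
      have := hA₂.dotProduct_mulVec_pos hy
      rwa [star_trivial] at this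
  set d : Fin n → ℝ := hB.1.eigenvalues with hddef
  set U : Matrix (Fin n) (Fin n) ℝ := (hB.1.eigenvectorUnitary : Matrix (Fin n) (Fin n) ℝ)
    with hUdef
  have hspec : B = U * diagonal d * star U := by
    have := hB.1.spectral_theorem
    simpa using this
  have h1 : U * star U = 1 := (Matrix.mem_unitaryGroup_iff).mp hB.1.eigenvectorUnitary.2
  have hUinv : U⁻¹ = star U := Matrix.inv_eq_right_inv h1
  have h1' : star U * U = 1 := (Matrix.mem_unitaryGroup_iff').mp hB.1.eigenvectorUnitary.2
  have hUdet : IsUnit U.det :=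
    (Matrix.isUnit_iff_isUnit_det _).mp ⟨⟨U, star U, h1, h1'⟩, rfl⟩
  have hPdet : IsUnit (S * U).det := by
    rw [Matrix.det_mul]; exact hSdet.mul hUdet
  have hPinv : (S * U)⁻¹ = star U * S⁻¹ := by rw [Matrix.mul_inv_rev, hUinv]
  have hAeq : A₁ * A₂ = (S * U) * diagonal d * (S * U)⁻¹ := by
    calc A₁ * A₂ = S * S * A₂ * (S * S⁻¹) := by
          rw [hSS, Matrix.mul_nonsing_inv S hSdet, Matrix.mul_one]
      _ = S * (S * A₂ * S) * S⁻¹ := by simp only [Matrix.mul_assoc]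
      _ = S * (U * diagonal d * star U) * S⁻¹ := by rw [← hBdef, hspec]
      _ = S * U * diagonal d * (star U * S⁻¹) := by simp only [Matrix.mul_assoc]
      _ = S * U * diagonal d * (S * U)⁻¹ := by rw [hPinv]
  constructor
  · rw [hAeq]
    exact normallyElliptic_conj _ hPdet _ fun i => hB.eigenvalues_pos i
  · exact ⟨S * U, diagonal d, hPdet, Matrix.isDiag_diagonal d, hAeq⟩

end Main

/-- Symmetric positive definite factorization: `A` is normally elliptic and
diagonalizable over ℝ iff it is the product of two symmetric positive definite
matrices. -/
theorem normallyElliptic_and_diagonalizable_iff_spd_factorization {n : ℕ}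
    (A : Matrix (Fin n) (Fin n) ℝ) :
    (NormallyElliptic A ∧ DiagonalizableR A) ↔
      ∃ A₁ A₂ : Matrix (Fin n) (Fin n) ℝ,
        A₁.IsSymm ∧ PosDefMat A₁ ∧ A₂.IsSymm ∧ PosDefMat A₂ ∧ A = A₁ * A₂ := by
  constructor
  · rintro ⟨hNE, P, Λ, hP, hΛ, hA⟩
    exact forward_dir hNE P Λ hP hΛ hA
  · rintro ⟨A₁, A₂, h1s, h1p, h2s, h2p, rfl⟩
    obtain ⟨hne, P, Λ, hP, hΛ, hA⟩ := backward_dir A₁ A₂ h1s h1p h2s h2p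
    exact ⟨hne, P, Λ, hP, hΛ, hA⟩
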